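/- Let G be a profinite group. The category of discrete G-modules has a non-zero projective object if and only if G is finite. -/

import Mathlib

open Function

/-- A module over the group ring `ℤ[G]` is a *discrete* `G`-module if every element is
fixed by some open normal subgroup of `G`. -/
def IsDiscreteGMod (G : Type) [Group G] [TopologicalSpace G]
    (M : ModuleCat.{0} (MonoidAlgebra ℤ G)) : Prop :=
  ∀ x : M, ∃ H : Subgroup G, H.Normal ∧ IsOpen (H : Set G) ∧
    ∀ h ∈ H, (MonoidAlgebra.of ℤ G h) • x = x

/-- `P` is a projective object of the category of discrete `G`-modules:
any map from `P` to a discrete module lifts along any epimorphism (= surjection)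
of discrete modules. -/
def IsProjectiveDiscreteGMod (G : Type) [Group G] [TopologicalSpace G]
    (P : ModuleCat.{0} (MonoidAlgebra ℤ G)) : Prop :=
  ∀ (M N : ModuleCat.{0} (MonoidAlgebra ℤ G)), IsDiscreteGMod G M → IsDiscreteGMod G N →
    ∀ f : M →ₗ[MonoidAlgebra ℤ G] N, Surjective f →
      ∀ g : P →ₗ[MonoidAlgebra ℤ G] N,
        ∃ h : P →ₗ[MonoidAlgebra ℤ G] M, f.comp h = g

/-! ### Auxiliary material

We formalize the following proof.

For the easy direction, if `G` is finite then `ℤ[G]` itself is a nonzero discrete projective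
module.

For the hard direction, suppose `G` is infinite and `P` is a nonzero discrete projective module.
For an open normal subgroup `U ≤ G`, the module `ℤ[G⧸U]` is discrete, and for `W ≤ U` the
natural projection `ℤ[G⧸W] → ℤ[G⧸U]` is a surjection of discrete modules.

Key lemma: every `ℤ[G]`-linear map `τ : P → ℤ[G⧸U]` is zero.  Indeed, fix `x ∈ P`, fixed by
an open normal subgroup, and let `U₁ = U ⊓ Stab(x)`.  For any open normal `W ≤ U`,
projectivity lifts `τ` to `τ' : P → ℤ[G⧸W]`; the element `z = τ' x` is invariant under the
image `D` of `U₁` in `G⧸W` (acting by left translation, a free action), and each coefficient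
of `τ x` is the sum of the coefficients of `z` over a `D`-invariant set, hence divisible by
`|D|`.  Since `G` is an infinite profinite group, `|D|` can be made arbitrarily large by
shrinking `W`, so every coefficient of `τ x` is zero.

Finally, `P` admits a surjection from a direct sum `⊕_{y : P} ℤ[G⧸U_y]` of such modules,
which splits by projectivity; all components of the splitting vanish by the key lemma,
so `P = 0`, a contradiction. -/

section QMdefs

open MonoidAlgebra

variable {G : Type} [Group G]

/-- The `ℤ[G]`-module `ℤ[G⧸U]`. -/
abbrev QM (G : Type) [Group G] (U : Subgroup G) [U.Normal] : Type := MonoidAlgebra ℤ (G ⧸ U)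

noncomputable instance qmModule (U : Subgroup G) [U.Normal] :
    Module (MonoidAlgebra ℤ G) (QM G U) :=
  Module.compHom _ (MonoidAlgebra.mapDomainRingHom ℤ (QuotientGroup.mk' U))

lemma qm_smul (U : Subgroup G) [U.Normal] (r : MonoidAlgebra ℤ G) (x : QM G U) :
    r • x = MonoidAlgebra.mapDomainRingHom ℤ (QuotientGroup.mk' U) r * x := rfl

lemma qm_of_smul (U : Subgroup G) [U.Normal] (g : G) (x : QM G U) :
    (MonoidAlgebra.of ℤ G g) • x = MonoidAlgebra.single ((g : G ⧸ U)) (1 : ℤ) * x := by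
  rw [qm_smul]
  congr 1
  simp [MonoidAlgebra.of_apply, MonoidAlgebra.mapDomainRingHom_apply, Finsupp.mapDomain_single]

lemma qm_fixed (U : Subgroup G) [U.Normal] {h : G} (hh : h ∈ U) (x : QM G U) :
    (MonoidAlgebra.of ℤ G h) • x = x := by
  rw [qm_of_smul]
  have : ((h : G ⧸ U)) = 1 := (QuotientGroup.eq_one_iff h).2 hh
  rw [this, ← MonoidAlgebra.one_def, one_mul]

lemma mapDomainRingHom_apply' {H : Type} [Group H] (f : G →* H) (x : MonoidAlgebra ℤ G) :
    MonoidAlgebra.mapDomainRingHom ℤ f x = MonoidAlgebra.ofCoeff (Finsupp.mapDomain f x.coeff) := rfl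

/-- Projection `G⧸U →* G⧸V` for `U ≤ V`. -/
def projHom (U V : Subgroup G) [U.Normal] [V.Normal] (h : U ≤ V) : (G ⧸ U) →* (G ⧸ V) :=
  QuotientGroup.map U V (MonoidHom.id G) (fun x hx => h hx)

lemma projHom_mk (U V : Subgroup G) [U.Normal] [V.Normal] (h : U ≤ V) (g : G) :
    projHom U V h (g : G ⧸ U) = (g : G ⧸ V) := rfl

lemma projHom_comp_mk (U V : Subgroup G) [U.Normal] [V.Normal] (h : U ≤ V) :
    ∀ r : MonoidAlgebra ℤ G,
      MonoidAlgebra.mapDomainRingHom ℤ (projHom U V h)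
        (MonoidAlgebra.mapDomainRingHom ℤ (QuotientGroup.mk' U) r)
      = MonoidAlgebra.mapDomainRingHom ℤ (QuotientGroup.mk' V) r := by
  intro r
  simp only [mapDomainRingHom_apply']
  rw [← Finsupp.mapDomain_comp]
  rfl

/-- The projection as a `ℤ[G]`-linear map. -/
noncomputable def projQM (U V : Subgroup G) [U.Normal] [V.Normal] (h : U ≤ V) :
    QM G U →ₗ[MonoidAlgebra ℤ G] QM G V where
  toFun := MonoidAlgebra.mapDomainRingHom ℤ (projHom U V h)
  map_add' := map_add _
  map_smul' := by
    intro r x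
    simp only [RingHom.id_apply, qm_smul, map_mul, projHom_comp_mk]

lemma projQM_surjective (U V : Subgroup G) [U.Normal] [V.Normal] (h : U ≤ V) :
    Surjective (projQM U V h) := by
  intro y
  have hsurj : Surjective (projHom U V h) := by
    rintro ⟨g⟩
    exact ⟨((g : G) : G ⧸ U), rfl⟩
  refine ⟨MonoidAlgebra.ofCoeff (Finsupp.mapDomain (surjInv hsurj) y.coeff), ?_⟩
  show MonoidAlgebra.mapDomainRingHom ℤ (projHom U V h) _ = y
  simp only [mapDomainRingHom_apply']
  rw [← Finsupp.mapDomain_comp]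
  have : ⇑(projHom U V h) ∘ surjInv hsurj = id := funext (rightInverse_surjInv hsurj)
  rw [this, Finsupp.mapDomain_id]

lemma projQM_apply (U V : Subgroup G) [U.Normal] [V.Normal] (h : U ≤ V) (x : QM G U) :
    projQM U V h x = MonoidAlgebra.ofCoeff (Finsupp.mapDomain (projHom U V h) x.coeff) := rfl

end QMdefs

section Cover

open MonoidAlgebra

variable {G : Type} [Group G] (U : Subgroup G) [U.Normal] {M : Type} [AddCommGroup M]
  [Module (MonoidAlgebra ℤ G) M] (y : M)
  (hy : ∀ h ∈ U, (MonoidAlgebra.of ℤ G h) • y = y)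

/-- The orbit function `G⧸U → M` of a `U`-fixed element `y`. -/
noncomputable def covFun : (G ⧸ U) → M :=
  Quotient.lift (fun g : G => (MonoidAlgebra.of ℤ G g) • y) (by
    intro a b hab
    have h : a⁻¹ * b ∈ U := QuotientGroup.leftRel_apply.1 hab
    have hb : b = a * (a⁻¹ * b) := by group
    rw [hb, map_mul, mul_smul, hy _ h])

lemma covFun_mk (g : G) : covFun U y hy ((g : G ⧸ U)) = (MonoidAlgebra.of ℤ G g) • y := rfl

lemma covFun_mul (g : G) (q : G ⧸ U) :
    covFun U y hy ((g : G ⧸ U) * q) = (MonoidAlgebra.of ℤ G g) • covFun U y hy q := by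
  induction q using Quotient.inductionOn with
  | h a =>
    show covFun U y hy ((g * a : G) : G ⧸ U) = _
    rw [covFun_mk, covFun_mk, map_mul, mul_smul]

/-- The `ℤ[G]`-linear map `ℤ[G⧸U] → M` sending the identity coset to `y`. -/
noncomputable def covL : QM G U →ₗ[MonoidAlgebra ℤ G] M where
  toFun := fun a => Finsupp.liftAddHom (fun q => (zmultiplesHom M (covFun U y hy q))) a.coeff
  map_add' := fun a b => map_add _ a.coeff b.coeff
  map_smul' := by
    intro r a
    simp only [RingHom.id_apply]
    have hcomm : ∀ (r : MonoidAlgebra ℤ G) (m : ℤ) (c : M), r • (m • c) = m • (r • c) :=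
      fun r m c => (smulAddHom (MonoidAlgebra ℤ G) M r).map_zsmul m c
    induction a using MonoidAlgebra.induction_linear with
    | zero => rw [smul_zero, MonoidAlgebra.coeff_zero, map_zero, smul_zero]
    | add f g hf hg => rw [smul_add, MonoidAlgebra.coeff_add, map_add, MonoidAlgebra.coeff_add,
        map_add, hf, hg, smul_add]
    | single q m =>
      induction r using MonoidAlgebra.induction_linear with
      | zero => rw [zero_smul, MonoidAlgebra.coeff_zero, map_zero, zero_smul]
      | add f g hf hg => rw [add_smul, MonoidAlgebra.coeff_add, map_add, hf, hg, add_smul]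
      | single g k =>
        rw [qm_smul]
        have h1 : MonoidAlgebra.mapDomainRingHom ℤ (QuotientGroup.mk' U)
            (MonoidAlgebra.single g k) = MonoidAlgebra.single ((g : G ⧸ U)) k := by
          show MonoidAlgebra.mapDomain _ _ = _
          rw [MonoidAlgebra.mapDomain_single]; rfl
        rw [h1, MonoidAlgebra.single_mul_single, MonoidAlgebra.coeff_single,
          MonoidAlgebra.coeff_single, Finsupp.liftAddHom_apply_single, Finsupp.liftAddHom_apply_single]
        show (k * m) • covFun U y hy ((g : G ⧸ U) * q)
            = MonoidAlgebra.single g k • (m • covFun U y hy q)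
        have hgk : MonoidAlgebra.single g k
            = k • (MonoidAlgebra.of ℤ G g) := by
          rw [MonoidAlgebra.of_apply]
          rw [MonoidAlgebra.smul_single]
          norm_num
        rw [covFun_mul, hgk, smul_assoc, hcomm, mul_smul]

lemma covL_single_one : covL U y hy (MonoidAlgebra.single (1 : G ⧸ U) (1:ℤ)) = y := by
  show Finsupp.liftAddHom (fun q => (zmultiplesHom M (covFun U y hy q)))
      (MonoidAlgebra.single (1 : G ⧸ U) (1:ℤ)).coeff = y
  rw [MonoidAlgebra.coeff_single, Finsupp.liftAddHom_apply_single]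
  have h1 : ((1:G) : G ⧸ U) = 1 := QuotientGroup.mk_one U
  show (1:ℤ) • covFun U y hy 1 = y
  rw [← h1, covFun_mk, one_smul, map_one, one_smul]

end Cover

section Combinatorics

/-- Sum of an invariant function over an invariant finset, under the free translation action
of a subgroup `D` of a finite group `X`, is divisible by `|D|`. -/
lemma sum_dvd_of_invariant {X : Type} [Group X] [Fintype X] (D : Subgroup X)
    (z : X → ℤ) (hz : ∀ t ∈ D, ∀ p, z (t * p) = z p)
    (F : Finset X) (hF : ∀ t ∈ D, ∀ p ∈ F, t * p ∈ F) :
    (Nat.card D : ℤ) ∣ ∑ p ∈ F, z p := by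
  classical
  induction F using Finset.strongInduction with
  | _ F ih =>
    rcases F.eq_empty_or_nonempty with rfl | ⟨p₀, hp₀⟩
    · simp
    · haveI : Fintype D := Fintype.ofFinite D
      set O : Finset X := Finset.image (fun t : D => (t : X) * p₀) Finset.univ with hO
      have hinj : Injective (fun t : D => (t : X) * p₀) := by
        intro a b hab
        exact Subtype.ext (mul_left_injective p₀ hab)
      have hOsub : O ⊆ F := by
        intro p hp
        rcases Finset.mem_image.1 hp with ⟨t, -, rfl⟩
        exact hF t t.2 p₀ hp₀
      have hp₀O : p₀ ∈ O := by
        refine Finset.mem_image.2 ⟨1, Finset.mem_univ _, ?_⟩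
        simp
      have hsumO : ∑ p ∈ O, z p = (Nat.card D : ℤ) * z p₀ := by
        rw [hO, Finset.sum_image (fun a _ b _ hab => hinj hab)]
        have : ∀ t : D, z ((t : X) * p₀) = z p₀ := fun t => hz t t.2 p₀
        rw [Finset.sum_congr rfl (fun t _ => this t), Finset.sum_const, Finset.card_univ,
          Nat.card_eq_fintype_card]
        simp [mul_comm]
      have hss : F \ O ⊂ F :=
        Finset.sdiff_ssubset hOsub ⟨p₀, hp₀O⟩
      have hFO : ∀ t ∈ D, ∀ p ∈ F \ O, t * p ∈ F \ O := by
        intro t ht p hp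
        rcases Finset.mem_sdiff.1 hp with ⟨hpF, hpO⟩
        refine Finset.mem_sdiff.2 ⟨hF t ht p hpF, ?_⟩
        intro hcon
        rcases Finset.mem_image.1 hcon with ⟨t', -, ht'⟩
        apply hpO
        refine Finset.mem_image.2 ⟨⟨t, ht⟩⁻¹ * t', Finset.mem_univ _, ?_⟩
        have : (t : X) * p = (t' : X) * p₀ := ht'.symm
        push_cast
        rw [mul_assoc]
        rw [← this]
        group
      have := ih (F \ O) hss hFO
      have hsplit : ∑ p ∈ F, z p = ∑ p ∈ F \ O, z p + ∑ p ∈ O, z p :=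
        (Finset.sum_sdiff hOsub).symm
      rw [hsplit]
      exact dvd_add this ⟨z p₀, hsumO⟩

/-- Coefficient of `mapDomain` as a sum over the fiber. -/
lemma mapDomain_apply_eq_sum {α β : Type} [Fintype α] [DecidableEq β] (f : α → β)
    (z : α →₀ ℤ) (q : β) :
    Finsupp.mapDomain f z q = ∑ p ∈ Finset.univ.filter (fun p => f p = q), z p := by
  classical
  rw [Finsupp.mapDomain, Finsupp.sum_apply]
  rw [Finsupp.sum]
  have h1 : ∑ a ∈ z.support, Finsupp.single (f a) (z a) q
      = ∑ a ∈ z.support, if f a = q then z a else 0 := by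
    refine Finset.sum_congr rfl fun a _ => ?_
    rw [Finsupp.single_apply]
  rw [h1]
  rw [Finset.sum_subset (Finset.subset_univ z.support)
    (fun a _ ha => by rw [Finsupp.notMem_support_iff.1 ha]; simp)]
  rw [Finset.sum_filter]

end Combinatorics

section Profinite

variable {G : Type} [Group G] [TopologicalSpace G] [IsTopologicalGroup G]
  [CompactSpace G] [T2Space G] [TotallyDisconnectedSpace G]

lemma exists_openNormal_le {S : Set G} (hS : IsOpen S) (h1 : (1:G) ∈ S) :
    ∃ W : Subgroup G, W.Normal ∧ IsOpen (W : Set G) ∧ (W : Set G) ⊆ S := by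
  obtain ⟨V, hV, h1V, hVS⟩ := compact_exists_isClopen_in_isOpen hS h1
  obtain ⟨H, hH⟩ := IsTopologicalGroup.exist_openNormalSubgroup_sub_clopen_nhds_of_one hV h1V
  exact ⟨H.toSubgroup, H.isNormal', H.isOpen', hH.trans hVS⟩

/-- Key finiteness pick: given an infinite profinite `G`, open subgroups `U₁ ≤ G` (with `U`
open normal), for any `n` there is an open normal `W ≤ U` such that the image of `U₁` in
`G⧸W` has at least `n+1` elements. -/
lemma exists_W (hGinf : Infinite G) (U U₁ : Subgroup G) [U.Normal]
    (hUo : IsOpen (U : Set G)) (hU₁o : IsOpen (U₁ : Set G)) (n : ℕ) :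
    ∃ W : Subgroup G, W.Normal ∧ IsOpen (W : Set G) ∧ W ≤ U ∧
      ∃ v : Fin (n+1) → G, (∀ i, v i ∈ U₁) ∧
        Injective (fun i => ((v i : G) : G ⧸ W)) := by
  classical
  haveI : Finite (G ⧸ U₁) := U₁.quotient_finite_of_isOpen hU₁o
  haveI hU₁inf : Infinite U₁ := by
    by_contra hfin
    rw [not_infinite_iff_finite] at hfin
    have : Finite G :=
      Finite.of_equiv ((G ⧸ U₁) × U₁) (Subgroup.groupEquivQuotientProdSubgroup (s := U₁)).symm
    exact (not_finite_iff_infinite.2 hGinf) this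
  set emb := Infinite.natEmbedding U₁ with hemb
  set u : Fin (n+1) → G := fun i => ((emb i.1 : U₁) : G) with hu
  have hu_mem : ∀ i, u i ∈ U₁ := fun i => (emb i.1).2
  have hu_inj : Injective u := by
    intro i j hij
    exact Fin.ext (by exact_mod_cast emb.injective (Subtype.ext hij))
  set B : Set G := (fun ij : Fin (n+1) × Fin (n+1) => (u ij.1)⁻¹ * u ij.2) ''
    {ij | ij.1 ≠ ij.2} with hB
  have hBfin : B.Finite := (Set.toFinite _).image _
  have h1B : (1:G) ∉ B := by
    rintro ⟨⟨i, j⟩, hij, heq⟩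
    exact hij (hu_inj (inv_mul_eq_one.1 heq))
  have hopen : IsOpen ((U : Set G) ∩ Bᶜ) :=
    hUo.inter hBfin.isClosed.isOpen_compl
  obtain ⟨W, hWn, hWo, hWsub⟩ := exists_openNormal_le hopen ⟨U.one_mem, h1B⟩
  have hWle : W ≤ U := fun g hg => (hWsub hg).1
  refine ⟨W, hWn, hWo, hWle, u, hu_mem, ?_⟩
  intro i j hij
  by_contra hne
  have h3 : (u i)⁻¹ * u j ∈ W := QuotientGroup.eq.1 hij
  exact (hWsub h3).2 ⟨(i, j), hne, rfl⟩

lemma isDiscrete_QM (U : Subgroup G) [U.Normal] (hUo : IsOpen (U : Set G)) :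
    IsDiscreteGMod G (ModuleCat.of (MonoidAlgebra ℤ G) (QM G U)) :=
  fun x => ⟨U, inferInstance, hUo, fun h hh => qm_fixed U hh x⟩

/-- Key lemma: any `ℤ[G]`-linear map from a projective discrete module to `ℤ[G⧸U]`
vanishes, provided `G` is infinite. -/
lemma hom_to_QM_eq_zero (hGinf : Infinite G)
    (P : ModuleCat.{0} (MonoidAlgebra ℤ G)) (hdis : IsDiscreteGMod G P)
    (hproj : IsProjectiveDiscreteGMod G P)
    (U : Subgroup G) [U.Normal] (hUo : IsOpen (U : Set G))
    (τ : ↑P →ₗ[MonoidAlgebra ℤ G] QM G U) (x : ↑P) : τ x = 0 := by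
  classical
  obtain ⟨Hx, hHxn, hHxo, hHxfix⟩ := hdis x
  set U₁ := U ⊓ Hx with hU₁
  haveI hU₁n : U₁.Normal := by
    constructor
    intro a ha g
    rcases Subgroup.mem_inf.1 ha with ⟨h1, h2⟩
    exact Subgroup.mem_inf.2 ⟨‹U.Normal›.conj_mem a h1 g, hHxn.conj_mem a h2 g⟩
  have hU₁o : IsOpen (U₁ : Set G) := by
    rw [hU₁, Subgroup.coe_inf]; exact hUo.inter hHxo
  have hU₁fix : ∀ h ∈ U₁, (MonoidAlgebra.of ℤ G h) • x = x :=
    fun h hh => hHxfix h (Subgroup.mem_inf.1 hh).2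
  have hU₁le : U₁ ≤ U := inf_le_left
  ext q
  rw [MonoidAlgebra.coeff_zero, Finsupp.coe_zero, Pi.zero_apply]
  by_contra hc
  set n := ((τ x).coeff q).natAbs with hn
  obtain ⟨W, hWn, hWo, hWle, v, hv_mem, hv_inj⟩ := exists_W hGinf U U₁ hUo hU₁o n
  haveI := hWn
  haveI : Finite (G ⧸ W) := W.quotient_finite_of_isOpen hWo
  haveI : Fintype (G ⧸ W) := Fintype.ofFinite _
  obtain ⟨τ', hτ'⟩ := hproj (ModuleCat.of _ (QM G W)) (ModuleCat.of _ (QM G U))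
    (isDiscrete_QM W hWo) (isDiscrete_QM U hUo) (projQM W U hWle)
    (projQM_surjective W U hWle) τ
  set z : QM G W := τ' x with hz
  have hτx : τ x = MonoidAlgebra.ofCoeff (Finsupp.mapDomain (projHom W U hWle) z.coeff) := by
    rw [← projQM_apply]
    exact (LinearMap.congr_fun hτ' x).symm
  -- invariance of z under U₁
  have hzinv : ∀ u' ∈ U₁, ∀ p : G ⧸ W, z.coeff (((u' : G) : G ⧸ W) * p) = z.coeff p := by
    intro u' hu' p
    have h1 : (MonoidAlgebra.of ℤ G u') • z = z := by
      show (MonoidAlgebra.of ℤ G u') • τ' x = τ' x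
      have h1' := map_smul τ' (MonoidAlgebra.of ℤ G u') x
      rw [hU₁fix u' hu'] at h1'
      exact h1'.symm
    rw [qm_of_smul] at h1
    have h2 := congrArg (fun w : QM G W => w.coeff (((u' : G) : G ⧸ W) * p)) h1
    simpa [MonoidAlgebra.single_mul_apply, inv_mul_cancel_left] using h2.symm
  set F : Finset (G ⧸ W) :=
    Finset.univ.filter (fun p => projHom W U hWle p = q) with hF
  have hcoef : (τ x).coeff q = ∑ p ∈ F, z.coeff p := by
    rw [hτx, MonoidAlgebra.coeff_ofCoeff, mapDomain_apply_eq_sum]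
  set D : Subgroup (G ⧸ W) := U₁.map (QuotientGroup.mk' W) with hD
  have hzD : ∀ t ∈ D, ∀ p, z.coeff (t * p) = z.coeff p := by
    rintro t ⟨u', hu', rfl⟩ p
    exact hzinv u' hu' p
  have hFD : ∀ t ∈ D, ∀ p ∈ F, t * p ∈ F := by
    rintro t ⟨u', hu', rfl⟩ p hp
    rw [hF, Finset.mem_filter] at hp ⊢
    refine ⟨Finset.mem_univ _, ?_⟩
    rw [map_mul]
    have h4 : projHom W U hWle ((QuotientGroup.mk' W) u') = 1 := by
      show ((u' : G) : G ⧸ U) = 1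
      exact (QuotientGroup.eq_one_iff _).2 (hU₁le hu')
    rw [h4, one_mul, hp.2]
  have hdvd : (Nat.card D : ℤ) ∣ (τ x).coeff q := by
    rw [hcoef]
    exact sum_dvd_of_invariant D z.coeff hzD F hFD
  -- cardinality bound
  have hinj : Injective (fun i : Fin (n+1) =>
      (⟨((v i : G) : G ⧸ W), ⟨v i, hv_mem i, rfl⟩⟩ : D)) :=
    fun i j hij => hv_inj (congrArg Subtype.val hij)
  have hcard : n + 1 ≤ Nat.card D := by
    calc n + 1 = Nat.card (Fin (n+1)) := by simp
      _ ≤ Nat.card D := Nat.card_le_card_of_injective _ hinj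
  have hle : Nat.card D ≤ n := by
    have h5 : Nat.card D ∣ ((τ x).coeff q).natAbs := by
      rwa [Int.natCast_dvd] at hdvd
    exact hn ▸ Nat.le_of_dvd (Int.natAbs_pos.2 hc) h5
  omega

end Profinite

open DirectSum in
/-- **(Chirvasitu–Kanda, Theorem 2.1.)** For a profinite group `G`, the category of discrete
`G`-modules has a non-zero projective object if and only if `G` is finite. -/
theorem stmt_0 (G : Type) [Group G] [TopologicalSpace G] [IsTopologicalGroup G]
    [CompactSpace G] [T2Space G] [TotallyDisconnectedSpace G] :
    (∃ P : ModuleCat.{0} (MonoidAlgebra ℤ G),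
        IsDiscreteGMod G P ∧ Nontrivial P ∧ IsProjectiveDiscreteGMod G P) ↔ Finite G := by
  classical
  constructor
  · rintro ⟨P, hdis, hnt, hproj⟩
    by_contra hfin
    rw [not_finite_iff_infinite] at hfin
    obtain ⟨a, b, hab⟩ := hnt
    have hx : a - b ≠ 0 := sub_ne_zero.2 hab
    -- the canonical cover of P
    choose Uf hUfn hUfo hUffix using fun x : ↑P => hdis x
    haveI : ∀ y : ↑P, (Uf y).Normal := hUfn
    let A : ↑P → Type := fun y => QM G (Uf y)
    let Mbig := ⨁ (y : ↑P), A y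
    let f : Mbig →ₗ[MonoidAlgebra ℤ G] ↑P :=
      DirectSum.toModule (MonoidAlgebra ℤ G) (↑P) (↑P) (fun y => covL (Uf y) y (hUffix y))
    have hfsurj : Surjective f := by
      intro y
      refine ⟨DirectSum.lof (MonoidAlgebra ℤ G) (↑P) A y (MonoidAlgebra.single 1 1), ?_⟩
      rw [show f (DirectSum.lof (MonoidAlgebra ℤ G) (↑P) A y (MonoidAlgebra.single 1 1))
          = covL (Uf y) y (hUffix y) (MonoidAlgebra.single 1 1) from DirectSum.toModule_lof _ _ _]
      exact covL_single_one (Uf y) y (hUffix y)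
    have hMdis : IsDiscreteGMod G (ModuleCat.of _ Mbig) := by
      intro m
      induction m using DirectSum.induction_on with
      | zero =>
        refine ⟨⊤, inferInstance, ?_, fun h _ => smul_zero _⟩
        rw [Subgroup.coe_top]; exact isOpen_univ
      | of y a =>
        refine ⟨Uf y, hUfn y, hUfo y, fun h hh => ?_⟩
        have h1 : DirectSum.of A y a = DirectSum.lof (MonoidAlgebra ℤ G) ↑P A y a :=
          (DirectSum.lof_eq_of _ _ _ _ _).symm
        rw [h1, ← (DirectSum.lof (MonoidAlgebra ℤ G) (↑P) A y).map_smul,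
          qm_fixed (Uf y) hh a]
      | add m₁ m₂ h₁ h₂ =>
        obtain ⟨H₁, hn₁, ho₁, hf₁⟩ := h₁
        obtain ⟨H₂, hn₂, ho₂, hf₂⟩ := h₂
        refine ⟨H₁ ⊓ H₂, ?_, ?_, fun h hh => ?_⟩
        · constructor
          intro a ha g
          rcases Subgroup.mem_inf.1 ha with ⟨ha1, ha2⟩
          exact Subgroup.mem_inf.2 ⟨hn₁.conj_mem a ha1 g, hn₂.conj_mem a ha2 g⟩
        · rw [Subgroup.coe_inf]; exact ho₁.inter ho₂
        · rcases Subgroup.mem_inf.1 hh with ⟨hh1, hh2⟩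
          rw [smul_add, hf₁ h hh1, hf₂ h hh2]
    obtain ⟨s, hs⟩ := hproj (ModuleCat.of _ Mbig) P hMdis hdis f hfsurj LinearMap.id
    have hzero : s (a - b) = 0 := by
      refine DirectSum.ext_component (MonoidAlgebra ℤ G) (fun y => ?_)
      have h7 := hom_to_QM_eq_zero hfin P hdis hproj (Uf y) (hUfo y)
        ((DirectSum.component (MonoidAlgebra ℤ G) (↑P) A y).comp s) (a - b)
      rw [LinearMap.comp_apply] at h7
      rw [map_zero]
      exact h7
    have h6 := LinearMap.congr_fun hs (a - b)
    rw [LinearMap.comp_apply, hzero, map_zero, LinearMap.id_apply] at h6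
    exact hx h6.symm
  · intro hfin
    refine ⟨ModuleCat.of (MonoidAlgebra ℤ G) (MonoidAlgebra ℤ G), ?_, ?_, ?_⟩
    · intro x
      refine ⟨⊥, inferInstance, ?_, ?_⟩
      · have h1 : IsOpen (({1}ᶜ : Set G)ᶜ) :=
          (Set.toFinite ({1}ᶜ : Set G)).isClosed.isOpen_compl
        rw [compl_compl] at h1
        rw [Subgroup.coe_bot]
        exact h1
      · intro h hh
        rw [Subgroup.mem_bot.1 hh, map_one, one_smul]
    · exact inferInstanceAs (Nontrivial (MonoidAlgebra ℤ G))
    · intro M N hM hN f hfs g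
      obtain ⟨m, hm⟩ := hfs (g (1 : MonoidAlgebra ℤ G))
      have key : ∀ r : MonoidAlgebra ℤ G, f (r • m) = g r := by
        intro r
        have h1 : f (r • m) = r • f m := map_smul f r m
        have h2 : g (r • (1 : MonoidAlgebra ℤ G)) = r • g (1 : MonoidAlgebra ℤ G) :=
          map_smul g r (1 : MonoidAlgebra ℤ G)
        have h3 : r • (1 : MonoidAlgebra ℤ G) = r := by rw [smul_eq_mul, mul_one]
        rw [h1, hm, ← h2, h3]
      refine ⟨{ toFun := fun r : MonoidAlgebra ℤ G => r • m,
                map_add' := fun r s =>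
                  add_smul (show MonoidAlgebra ℤ G from r) (show MonoidAlgebra ℤ G from s) m,
                map_smul' := fun r s =>
                  mul_smul r (show MonoidAlgebra ℤ G from s) m }, ?_⟩
      apply LinearMap.ext
      intro r
      exact key r
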